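/- For every Boolean function f : {0,1}^n → {0,1}, the deterministic u-query complexity satisfies D_u(f) ≤ cc_u(f) · bs_u(f). -/

import Mathlib

attribute [local instance 0] Classical.propDecidable

/-- Ternary values: `none` represents the uncertain value `u`,
`some b` represents the Boolean value `b`. -/
abbrev TVal := Option Bool

/-- The resolutions of `x ∈ {0,u,1}^ι`: all Boolean strings agreeing with
the determined coordinates of `x`. -/
def Res {ι : Type} (x : ι → Option Bool) : Set (ι → Bool) :=
  {y | ∀ i b, x i = some b → y i = b}

/-- The hazard-free extension of a Boolean function `f`. -/
noncomputable def hfext {ι : Type} (f : (ι → Bool) → Bool) (x : ι → Option Bool) :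
    Option Bool :=
  if ∀ y ∈ Res x, f y = true then some true
  else if ∀ y ∈ Res x, f y = false then some false
  else none

/-- Number of uncertain (`u`) coordinates of `x`. -/
noncomputable def uCount {ι : Type} [Fintype ι] (x : ι → Option Bool) : ℕ :=
  (Finset.univ.filter fun i : ι => x i = none).card

/-- u-sensitivity of `f` at `x`: the number of coordinates `i` such that
changing only coordinate `i` can change the value of the hazard-free extension. -/
noncomputable def sensAt {ι : Type} [Fintype ι] (f : (ι → Bool) → Bool)
    (x : ι → Option Bool) : ℕ :=
  (Finset.univ.filter fun i : ι => ∃ y : ι → Option Bool,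
      y i ≠ x i ∧ (∀ j, j ≠ i → y j = x j) ∧ hfext f y ≠ hfext f x).card

/-- u-sensitivity of `f`. -/
noncomputable def sensU {ι : Type} [Fintype ι] [DecidableEq ι]
    (f : (ι → Bool) → Bool) : ℕ :=
  Finset.univ.sup fun x : ι → Option Bool => sensAt f x

/-- u-sensitivity of `f` restricted to inputs whose hazard-free value is `b`. -/
noncomputable def sensULevel {ι : Type} [Fintype ι] [DecidableEq ι]
    (f : (ι → Bool) → Bool) (b : Option Bool) : ℕ :=
  (Finset.univ.filter fun x : ι → Option Bool => hfext f x = b).sup (sensAt f)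

/-- Boolean sensitivity of `f` at a Boolean input `x`. -/
noncomputable def boolSensAt {ι : Type} [Fintype ι] [DecidableEq ι]
    (f : (ι → Bool) → Bool) (x : ι → Bool) : ℕ :=
  (Finset.univ.filter fun i : ι => f (Function.update x i (!x i)) ≠ f x).card

/-- Boolean sensitivity of `f`. -/
noncomputable def boolSens {ι : Type} [Fintype ι] [DecidableEq ι]
    (f : (ι → Bool) → Bool) : ℕ :=
  Finset.univ.sup (boolSensAt f)

/-- There are `k` pairwise disjoint blocks, each of which is sensitive for the
hazard-free extension of `f` at `x`. -/
def HasSensBlocks {ι : Type} (f : (ι → Bool) → Bool) (x : ι → Option Bool)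
    (k : ℕ) : Prop :=
  ∃ (B : Fin k → Set ι) (y : Fin k → ι → Option Bool),
    (∀ j j', j ≠ j' → Disjoint (B j) (B j')) ∧
    ∀ j, (∀ i, y j i ≠ x i ↔ i ∈ B j) ∧ hfext f (y j) ≠ hfext f x

/-- u-block sensitivity of `f`. -/
noncomputable def bsU {ι : Type} (f : (ι → Bool) → Bool) : ℕ :=
  sSup {k | ∃ x, HasSensBlocks f x k}

/-- A ternary string `y` is consistent with a partial assignment
`p : ι → Option (Option Bool)` (`none` = `*`). -/
def Consistent {ι : Type} (y : ι → Option Bool) (p : ι → Option (Option Bool)) :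
    Prop :=
  ∀ i v, p i = some v → y i = v

/-- `p` is a certificate for the hazard-free extension of `f` at `x`. -/
def IsCert {ι : Type} (f : (ι → Bool) → Bool) (x : ι → Option Bool)
    (p : ι → Option (Option Bool)) : Prop :=
  Consistent x p ∧ ∀ y, Consistent y p → hfext f y = hfext f x

/-- Size of a partial assignment: the number of non-`*` coordinates. -/
noncomputable def certSize {ι : Type} [Fintype ι] (p : ι → Option (Option Bool)) :
    ℕ :=
  (Finset.univ.filter fun i : ι => p i ≠ none).card

/-- u-certificate complexity of `f` at `x`. -/
noncomputable def ccAt {ι : Type} [Fintype ι] (f : (ι → Bool) → Bool)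
    (x : ι → Option Bool) : ℕ :=
  sInf {k | ∃ p, IsCert f x p ∧ certSize p = k}

/-- u-certificate complexity of `f`. -/
noncomputable def ccU {ι : Type} [Fintype ι] [DecidableEq ι]
    (f : (ι → Bool) → Bool) : ℕ :=
  Finset.univ.sup fun x : ι → Option Bool => ccAt f x

/-- u-certificate complexity of `f` restricted to inputs with hazard-free value `b`. -/
noncomputable def ccULevel {ι : Type} [Fintype ι] [DecidableEq ι]
    (f : (ι → Bool) → Bool) (b : Option Bool) : ℕ :=
  (Finset.univ.filter fun x : ι → Option Bool => hfext f x = b).sup (ccAt f)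

/-- A set of literals (at most one per variable), encoded as a partial Boolean
assignment `q : ι → Option Bool`, is an implicant of `f` if `f` is `true` on
every Boolean input extending `q`. -/
def IsImplicant {ι : Type} (f : (ι → Bool) → Bool) (q : ι → Option Bool) : Prop :=
  ∀ y : ι → Bool, (∀ i b, q i = some b → y i = b) → f y = true

/-- Dually, an implicate of `f` forces the value `false`. -/
def IsImplicate {ι : Type} (f : (ι → Bool) → Bool) (q : ι → Option Bool) : Prop :=
  ∀ y : ι → Bool, (∀ i b, q i = some b → y i = b) → f y = false

/-- `q'` is a (literal-)subset of `q`. -/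
def SubAsn {ι : Type} (q' q : ι → Option Bool) : Prop :=
  ∀ i b, q' i = some b → q i = some b

def IsPrimeImplicant {ι : Type} (f : (ι → Bool) → Bool) (q : ι → Option Bool) :
    Prop :=
  IsImplicant f q ∧ ∀ q', SubAsn q' q → q' ≠ q → ¬ IsImplicant f q'

def IsPrimeImplicate {ι : Type} (f : (ι → Bool) → Bool) (q : ι → Option Bool) :
    Prop :=
  IsImplicate f q ∧ ∀ q', SubAsn q' q → q' ≠ q → ¬ IsImplicate f q'

/-- Number of literals of a partial assignment. -/
noncomputable def asnSize {ι : Type} [Fintype ι] (q : ι → Option Bool) : ℕ :=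
  (Finset.univ.filter fun i : ι => q i ≠ none).card

/-- Ternary decision trees: internal nodes query a variable and branch on the
three possible values `0`, `u`, `1`; leaves output a value in `{0,u,1}`. -/
inductive TTree (ι : Type) : Type where
  | leaf : Option Bool → TTree ι
  | node : ι → TTree ι → TTree ι → TTree ι → TTree ι

namespace TTree

def eval {ι : Type} : TTree ι → (ι → Option Bool) → Option Bool
  | .leaf b, _ => b
  | .node i t0 tu t1, x =>
    match x i with
    | some false => eval t0 x
    | none => eval tu x
    | some true => eval t1 x

def depth {ι : Type} : TTree ι → ℕ
  | .leaf _ => 0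
  | .node _ t0 tu t1 => max (max t0.depth tu.depth) t1.depth + 1

/-- Size of a tree: its number of leaves. -/
def size {ι : Type} : TTree ι → ℕ
  | .leaf _ => 1
  | .node _ t0 tu t1 => t0.size + tu.size + t1.size

end TTree

/-- Boolean decision trees. -/
inductive BTree (ι : Type) : Type where
  | leaf : Bool → BTree ι
  | node : ι → BTree ι → BTree ι → BTree ι

namespace BTree

def eval {ι : Type} : BTree ι → (ι → Bool) → Bool
  | .leaf b, _ => b
  | .node i t0 t1, x => if x i then eval t1 x else eval t0 x

def depth {ι : Type} : BTree ι → ℕ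
  | .leaf _ => 0
  | .node _ t0 t1 => max t0.depth t1.depth + 1

/-- Size of a tree: its number of leaves. -/
def size {ι : Type} : BTree ι → ℕ
  | .leaf _ => 1
  | .node _ t0 t1 => t0.size + t1.size

end BTree

/-- Deterministic u-query complexity: minimal depth of a ternary decision tree
computing the hazard-free extension of `f`. -/
noncomputable def Du {ι : Type} (f : (ι → Bool) → Bool) : ℕ :=
  sInf {d | ∃ T : TTree ι, (∀ x, T.eval x = hfext f x) ∧ T.depth = d}

/-- Minimal number of leaves of a ternary decision tree computing the
hazard-free extension of `f`. -/
noncomputable def sizeU {ι : Type} (f : (ι → Bool) → Bool) : ℕ :=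
  sInf {s | ∃ T : TTree ι, (∀ x, T.eval x = hfext f x) ∧ T.size = s}

/-- Deterministic (Boolean) query complexity of `f`. -/
noncomputable def Dbool {ι : Type} (f : (ι → Bool) → Bool) : ℕ :=
  sInf {d | ∃ T : BTree ι, (∀ x, T.eval x = f x) ∧ T.depth = d}

/-- Minimal number of leaves of a Boolean decision tree computing `f`. -/
noncomputable def sizeBool {ι : Type} (f : (ι → Bool) → Bool) : ℕ :=
  sInf {s | ∃ T : BTree ι, (∀ x, T.eval x = f x) ∧ T.size = s}

/-- Index type for `MUX_n`: `n` selector bits and `2^n` data bits. -/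
abbrev MUXIdx (n : ℕ) := Fin n ⊕ (Fin n → Bool)

/-- The multiplexer function: output the data bit addressed by the selector bits. -/
def MUX (n : ℕ) (z : MUXIdx n → Bool) : Bool :=
  z (Sum.inr fun i => z (Sum.inl i))

section Aux

variable {n : ℕ} (f : (Fin n → Bool) → Bool)

/-- `ρ'` extends `ρ` as a partial assignment. -/
def ExtA (ρ' ρ : Fin n → Option (Option Bool)) : Prop :=
  ∀ i v, ρ i = some v → ρ' i = some v

/-- `T` computes the hazard-free extension of `f` on all inputs consistent with `ρ`. -/
def GoodT (T : TTree (Fin n)) (ρ : Fin n → Option (Option Bool)) : Prop :=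
  ∀ x, Consistent x ρ → T.eval x = hfext f x

/-- Numbers of disjoint sensitive blocks avoiding the domain of `ρ`, at some
input consistent with `ρ` whose hazard-free value is determined. -/
def muSet (ρ : Fin n → Option (Option Bool)) : Set ℕ :=
  {k | ∃ x, Consistent x ρ ∧ hfext f x ≠ none ∧
    ∃ (B : Fin k → Set (Fin n)) (y : Fin k → Fin n → Option Bool),
      (∀ j j', j ≠ j' → Disjoint (B j) (B j')) ∧
      ∀ j, (∀ i, y j i ≠ x i ↔ i ∈ B j) ∧ (∀ i, i ∈ B j → ρ i = none) ∧
        hfext f (y j) ≠ hfext f x}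

noncomputable def muA (ρ : Fin n → Option (Option Bool)) : ℕ := sSup (muSet f ρ)

lemma hasSensBlocks_le {x : Fin n → Option Bool} {k : ℕ}
    (h : HasSensBlocks f x k) : k ≤ n := by
  obtain ⟨B, y, hdisj, hprop⟩ := h
  have hne : ∀ j, (B j).Nonempty := by
    intro j
    by_contra hemp
    rw [Set.not_nonempty_iff_eq_empty] at hemp
    have : y j = x := by
      funext i
      by_contra hnei
      have := ((hprop j).1 i).mp hnei
      rw [hemp] at this
      exact this
    exact (hprop j).2 (by rw [this])
  have hinj : Function.Injective fun j => (hne j).choose := by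
    intro j j' hjj
    simp only at hjj
    by_contra hne'
    have h1 := (hne j).choose_spec
    have h2 := (hne j').choose_spec
    rw [hjj] at h1
    exact Set.disjoint_left.mp (hdisj j j' hne') h1 h2
  simpa using Fintype.card_le_of_injective _ hinj

lemma muSet_sub_bs {ρ} : muSet f ρ ⊆ {k | ∃ x, HasSensBlocks f x k} := by
  rintro k ⟨x, _, _, B, y, hdisj, hprop⟩
  exact ⟨x, B, y, hdisj, fun j => ⟨(hprop j).1, (hprop j).2.2⟩⟩

lemma muSet_bdd {ρ} : BddAbove (muSet f ρ) :=
  ⟨n, fun k hk => hasSensBlocks_le f (muSet_sub_bs f hk).choose_spec⟩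

lemma bsSet_bdd : BddAbove {k | ∃ x, HasSensBlocks f x k} :=
  ⟨n, fun k hk => hasSensBlocks_le f hk.choose_spec⟩

lemma le_muA {ρ k} (h : k ∈ muSet f ρ) : k ≤ muA f ρ :=
  le_csSup (muSet_bdd f) h

lemma muA_le_bsU {ρ} : muA f ρ ≤ bsU f := by
  rcases Set.eq_empty_or_nonempty (muSet f ρ) with h | h
  · simp [muA, h]
  · exact csSup_le h fun k hk => le_csSup (bsSet_bdd f) (muSet_sub_bs f hk)

lemma res_getD {x : Fin n → Option Bool} : (fun i => (x i).getD false) ∈ Res x := by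
  intro i b h
  simp [h]

lemma exists_res_of_some {x : Fin n → Option Bool} {b : Bool}
    (h : hfext f x = some b) : ∃ y ∈ Res x, f y = b := by
  unfold hfext at h
  split_ifs at h with hA hB
  · cases h; exact ⟨_, res_getD, hA _ res_getD⟩
  · cases h; exact ⟨_, res_getD, hB _ res_getD⟩

lemma hfext_none_of {x : Fin n → Option Bool}
    (h0 : ∃ y ∈ Res x, f y = false) (h1 : ∃ y ∈ Res x, f y = true) :
    hfext f x = none := by
  obtain ⟨y0, hy0, hf0⟩ := h0
  obtain ⟨y1, hy1, hf1⟩ := h1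
  unfold hfext
  split_ifs with hA hB
  · rw [hA y0 hy0] at hf0; exact absurd hf0 (by simp)
  · rw [hB y1 hy1] at hf1; exact absurd hf1 (by simp)
  · rfl

lemma u_mem {ρ} {x0 x1 : Fin n → Option Bool}
    (h0c : Consistent x0 ρ) (h1c : Consistent x1 ρ)
    (h0 : hfext f x0 = some false) (h1 : hfext f x1 = some true) :
    ∃ z, Consistent z ρ ∧ hfext f z = none := by
  refine ⟨fun i => if x0 i = x1 i then x0 i else none, ?_, ?_⟩
  · intro i v h
    have e0 := h0c i v h
    have e1 := h1c i v h
    simp [e0, e1]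
  · obtain ⟨y0, hy0, hf0⟩ := exists_res_of_some f h0
    obtain ⟨y1, hy1, hf1⟩ := exists_res_of_some f h1
    refine hfext_none_of f ⟨y0, ?_, hf0⟩ ⟨y1, ?_, hf1⟩
    · intro i b h
      by_cases he : x0 i = x1 i
      · simp only [if_pos he] at h; exact hy0 i b h
      · simp [if_neg he] at h
    · intro i b h
      by_cases he : x0 i = x1 i
      · simp only [if_pos he] at h; exact hy1 i b (he ▸ h)
      · simp [if_neg he] at h

lemma one_mem {ρ} {x x' : Fin n → Option Bool}
    (hx : Consistent x ρ) (hx' : Consistent x' ρ)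
    (hne : hfext f x ≠ none) (hd : hfext f x' ≠ hfext f x) :
    1 ∈ muSet f ρ := by
  refine ⟨x, hx, hne, fun _ => {i | x' i ≠ x i}, fun _ => x', ?_, ?_⟩
  · intro j j' hjj
    exact absurd (Subsingleton.elim j j') hjj
  · intro _
    refine ⟨fun i => Iff.rfl, ?_, hd⟩
    intro i hi
    by_contra hr
    obtain ⟨v, hv⟩ := Option.ne_none_iff_exists'.mp hr
    exact hi ((hx' i v hv).trans (hx i v hv).symm)

lemma buildList (d : ℕ) :
    ∀ (L : List (Fin n)) (ρ : Fin n → Option (Option Bool)), L.Nodup →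
      (∀ i ∈ L, ρ i = none) →
      (∀ ρ', ExtA ρ' ρ → (∀ i, i ∉ L → ρ' i = ρ i) → (∀ i ∈ L, ρ' i ≠ none) →
        ∃ T : TTree (Fin n), GoodT f T ρ' ∧ T.depth ≤ d) →
      ∃ T : TTree (Fin n), GoodT f T ρ ∧ T.depth ≤ d + L.length := by
  intro L
  induction L with
  | nil =>
      intro ρ _ _ h
      obtain ⟨T, hT, hd⟩ := h ρ (fun _ _ hv => hv) (fun _ _ => rfl) (by simp)
      exact ⟨T, hT, by simpa using hd⟩
  | cons i L' ih =>
      intro ρ hnd hnone h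
      have hiL' : i ∉ L' := (List.nodup_cons.mp hnd).1
      have hnd' : L'.Nodup := (List.nodup_cons.mp hnd).2
      have hstep : ∀ v : Option Bool,
          ∃ T : TTree (Fin n), GoodT f T (Function.update ρ i (some v)) ∧
            T.depth ≤ d + L'.length := by
        intro v
        refine ih (Function.update ρ i (some v)) hnd' ?_ ?_
        · intro j hj
          rw [Function.update_of_ne (fun hji => hiL' (by rw [← hji]; exact hj))]
          exact hnone j (List.mem_cons_of_mem i hj)
        · intro ρ' hext hoff hdef
          refine h ρ' ?_ ?_ ?_
          · intro j w hw
            refine hext j w ?_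
            rw [Function.update_of_ne ?_]
            · exact hw
            · intro hji
              rw [hji, hnone i (List.mem_cons_self)] at hw
              exact absurd hw (by simp)
          · intro j hj
            have hji : j ≠ i := fun e => hj (e ▸ List.mem_cons_self)
            have hjL' : j ∉ L' := fun e => hj (List.mem_cons_of_mem i e)
            rw [hoff j hjL', Function.update_of_ne hji]
          · intro j hj
            rcases List.mem_cons.mp hj with he | hm
            · by_cases hjL' : j ∈ L'
              · exact hdef j hjL'
              · rw [hoff j hjL', he, Function.update_self]
                exact fun hc => absurd hc (by simp)
            · exact hdef j hm
      obtain ⟨T0, hT0, hd0⟩ := hstep (some false)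
      obtain ⟨Tu, hTu, hdu⟩ := hstep none
      obtain ⟨T1, hT1, hd1⟩ := hstep (some true)
      refine ⟨TTree.node i T0 Tu T1, ?_, ?_⟩
      · intro x hx
        have hupd : ∀ v : Option Bool, x i = v →
            Consistent x (Function.update ρ i (some v)) := by
          intro v hv j w hw
          by_cases hji : j = i
          · subst hji
            rw [Function.update_self] at hw
            cases hw; exact hv
          · rw [Function.update_of_ne hji] at hw
            exact hx j w hw
        show (match x i with
          | some false => T0.eval x
          | none => Tu.eval x
          | some true => T1.eval x) = hfext f x
        rcases hv : x i with _ | b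
        · exact hTu x (hupd none hv)
        · cases b
          · exact hT0 x (hupd (some false) hv)
          · exact hT1 x (hupd (some true) hv)
      · show max (max T0.depth Tu.depth) T1.depth + 1 ≤ d + (L'.length + 1)
        omega

lemma main_lemma : ∀ (k : ℕ) (ρ : Fin n → Option (Option Bool)), muA f ρ ≤ k →
    ∃ T : TTree (Fin n), GoodT f T ρ ∧ T.depth ≤ ccU f * k := by
  intro k
  induction k with
  | zero =>
      intro ρ hk
      by_cases hc : ∀ x x', Consistent x ρ → Consistent x' ρ → hfext f x = hfext f x'
      · set xρ : Fin n → Option Bool := fun i => (ρ i).getD none with hxρ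
        have hcons : Consistent xρ ρ := by intro i v h; simp [hxρ, h]
        refine ⟨TTree.leaf (hfext f xρ), ?_, by simp [TTree.depth]⟩
        intro x hx
        exact hc xρ x hcons hx
      · exfalso
        push_neg at hc
        obtain ⟨x, x', hx, hx', hneq⟩ := hc
        have h1 : 1 ∈ muSet f ρ := by
          by_cases h0 : hfext f x = none
          · exact one_mem f hx' hx (fun h => hneq (h0.trans h.symm)) hneq
          · exact one_mem f hx hx' h0 (Ne.symm hneq)
        have := le_muA f h1
        omega
  | succ k ih =>
      intro ρ hk
      by_cases hc : ∀ x x', Consistent x ρ → Consistent x' ρ → hfext f x = hfext f x'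
      · set xρ : Fin n → Option Bool := fun i => (ρ i).getD none with hxρ
        have hcons : Consistent xρ ρ := by intro i v h; simp [hxρ, h]
        refine ⟨TTree.leaf (hfext f xρ), ?_, by simp [TTree.depth]⟩
        intro x hx
        exact hc xρ x hcons hx
      push_neg at hc
      obtain ⟨x, x', hx, hx', hneq⟩ := hc
      -- find a consistent input with hazard-free value `u`
      have hwex : ∃ w, Consistent w ρ ∧ hfext f w = none := by
        by_cases h0 : hfext f x = none
        · exact ⟨x, hx, h0⟩
        by_cases h1 : hfext f x' = none
        · exact ⟨x', hx', h1⟩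
        obtain ⟨b0, hb0⟩ := Option.ne_none_iff_exists'.mp h0
        obtain ⟨b1, hb1⟩ := Option.ne_none_iff_exists'.mp h1
        have hbne : b0 ≠ b1 := by
          intro h; apply hneq; rw [hb0, hb1, h]
        cases b0 <;> cases b1 <;> simp at hbne
        · exact u_mem f hx hx' hb0 hb1
        · exact u_mem f hx' hx hb1 hb0
      obtain ⟨w, hw, hwu⟩ := hwex
      -- a minimum-size certificate at w
      have hcertset : {k | ∃ p, IsCert f w p ∧ certSize p = k}.Nonempty := by
        refine ⟨certSize (fun i => some (w i)), fun i => some (w i), ⟨?_, ?_⟩, rfl⟩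
        · intro i v h; cases h; rfl
        · intro y hy
          have : y = w := funext fun i => hy i (w i) rfl
          rw [this]
      obtain ⟨p, hcert, hsize⟩ := Nat.sInf_mem hcertset
      have hccw : certSize p ≤ ccU f := by
        rw [hsize]
        exact Finset.le_sup (f := fun x => ccAt f x) (Finset.mem_univ w)
      set L : List (Fin n) :=
        (Finset.univ.filter fun i => p i ≠ none ∧ ρ i = none).toList with hL
      have hmemL : ∀ i, i ∈ L ↔ (p i ≠ none ∧ ρ i = none) := by
        intro i
        rw [hL, Finset.mem_toList, Finset.mem_filter]
        simp
      have hlen : L.length ≤ ccU f := by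
        refine le_trans ?_ hccw
        rw [hL, Finset.length_toList]
        unfold certSize
        exact Finset.card_le_card (fun i hi => by
          rw [Finset.mem_filter] at hi ⊢
          exact ⟨hi.1, hi.2.1⟩)
      have hrec : ∀ ρ', ExtA ρ' ρ → (∀ i, i ∉ L → ρ' i = ρ i) →
          (∀ i ∈ L, ρ' i ≠ none) →
          ∃ T : TTree (Fin n), GoodT f T ρ' ∧ T.depth ≤ ccU f * k := by
        intro ρ' hext hoff hdef
        refine ih ρ' ?_
        rcases Nat.eq_zero_or_pos (muA f ρ') with hz | hpos
        · omega
        have hnonemp : (muSet f ρ').Nonempty := by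
          by_contra hemp
          rw [Set.not_nonempty_iff_eq_empty] at hemp
          rw [muA, hemp] at hpos
          simp at hpos
        have hmem : muA f ρ' ∈ muSet f ρ' := Nat.sSup_mem hnonemp (muSet_bdd f)
        set k' := muA f ρ' with hk'
        obtain ⟨xh, hxhc, hxhne, B, y, hdisj, hprop⟩ := hmem
        -- build the extra block from the certificate p
        set ystar : Fin n → Option Bool := fun i => (p i).getD (xh i) with hystar
        have hconsp : Consistent ystar p := by
          intro i v h; simp [hystar, h]
        have hystaru : hfext f ystar = none := by
          rw [hcert.2 ystar hconsp, hwu]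
        set B0 : Set (Fin n) := {i | ystar i ≠ xh i} with hB0
        have hB0sub : ∀ i ∈ B0, p i ≠ none ∧ ρ i = none := by
          intro i hi
          have hpne : p i ≠ none := by
            intro hp
            exact hi (by simp [hystar, hp])
          refine ⟨hpne, ?_⟩
          by_contra hr
          obtain ⟨v, hv⟩ := Option.ne_none_iff_exists'.mp hr
          obtain ⟨v', hv'⟩ := Option.ne_none_iff_exists'.mp hpne
          have h1 : w i = v' := hcert.1 i v' hv'
          have h2 : w i = v := hw i v hv
          have h3 : xh i = v := hxhc i v (hext i v hv)
          apply hi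
          have hvv : v' = v := by rw [← h1, h2]
          simp [hystar, hv', hvv, h3]
        have hB0L : ∀ i ∈ B0, i ∈ L := fun i hi => (hmemL i).mpr (hB0sub i hi)
        have hB0ρ' : ∀ i ∈ B0, ρ' i ≠ none := fun i hi => hdef i (hB0L i hi)
        have hBj_ρ : ∀ j, ∀ i ∈ B j, ρ i = none := by
          intro j i hi
          by_contra hr
          obtain ⟨v, hv⟩ := Option.ne_none_iff_exists'.mp hr
          have := (hprop j).2.1 i hi
          rw [hext i v hv] at this
          exact absurd this (by simp)
        have hdisj0 : ∀ j, Disjoint B0 (B j) := by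
          intro j
          rw [Set.disjoint_left]
          intro i hi hib
          exact hB0ρ' i hi ((hprop j).2.1 i hib)
        have hmem' : k' + 1 ∈ muSet f ρ := by
          refine ⟨xh, ?_, hxhne, Fin.cons B0 B, Fin.cons ystar y, ?_, ?_⟩
          · intro i v hv
            exact hxhc i v (hext i v hv)
          · intro j j' hjj
            induction j using Fin.cases with
            | zero =>
                induction j' using Fin.cases with
                | zero => exact absurd rfl hjj
                | succ j' => simpa using hdisj0 j'
            | succ j =>
                induction j' using Fin.cases with
                | zero => simpa using (hdisj0 j).symm
                | succ j' =>
                    have : j ≠ j' := fun h => hjj (by rw [h])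
                    simpa using hdisj j j' this
          · intro j
            induction j using Fin.cases with
            | zero =>
                refine ⟨by simp [hB0], ?_, by rw [Fin.cons_zero, hystaru]; exact (Ne.symm hxhne)⟩
                intro i hi
                rw [Fin.cons_zero] at hi
                exact (hB0sub i hi).2
            | succ j =>
                refine ⟨by simpa using (hprop j).1, ?_, by simpa using (hprop j).2.2⟩
                intro i hi
                rw [Fin.cons_succ] at hi
                exact hBj_ρ j i hi
        have := le_muA f hmem'
        omega
      obtain ⟨T, hT, hdT⟩ := buildList f (ccU f * k) L ρ (Finset.nodup_toList _)
        (fun i hi => ((hmemL i).mp hi).2) hrec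
      refine ⟨T, hT, ?_⟩
      calc T.depth ≤ ccU f * k + L.length := hdT
        _ ≤ ccU f * k + ccU f := by omega
        _ = ccU f * (k + 1) := by ring

end Aux

/-- The deterministic u-query complexity is at most `cc_u(f) · bs_u(f)`. -/
theorem stmt3 {n : ℕ} (f : (Fin n → Bool) → Bool) :
    Du f ≤ ccU f * bsU f := by
  obtain ⟨T, hT, hd⟩ := main_lemma f (bsU f) (fun _ => none)
    (le_trans (muA_le_bsU f) (le_refl _))
  have hmem : T.depth ∈ {d | ∃ T' : TTree (Fin n), (∀ x, T'.eval x = hfext f x) ∧ T'.depth = d} :=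
    ⟨T, fun x => hT x (fun i v hv => absurd hv (by simp)), rfl⟩
  exact le_trans (Nat.sInf_le hmem) hd
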